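/- Let k = k(n) satisfy k/√n → ∞ and k/n^{2/3} → 0, and let Ψ(x) = (1+x)log(1+x) − x. Then nΨ(k/n) − k²/(2n) → 0; consequently Q_{n,k} ~ (n/k²)·exp(k²/(2n)), meaning the ratio of the two sides tends to 1. -/

import Mathlib

open Filter

/-- The exact finite-width RNN signal energy `Q_{n,k}` in product form. -/
noncomputable def Q (n k : ℕ) : ℝ :=
  ((n : ℝ) / ((k + 1) * (k + 2))) *
    (∏ j ∈ Finset.range (k + 2), (1 + (j : ℝ) / n) -
     ∏ j ∈ Finset.range (k + 2), (1 - (j : ℝ) / n))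

/-- The exponent function `Ψ(x) = (1+x)log(1+x) − x`. -/
noncomputable def Psi (x : ℝ) : ℝ := (1 + x) * Real.log (1 + x) - x

/- ### Auxiliary lemmas -/

lemma RNN.le_log' {x : ℝ} (hx : 0 ≤ x) : x - x^2 ≤ Real.log (1+x) := by
  have h1 : (0:ℝ) < 1 + x := by linarith
  have h2 : 1 - (1+x)⁻¹ ≤ Real.log (1+x) := Real.one_sub_inv_le_log_of_pos h1
  have h3 : 1 - (1+x)⁻¹ = x / (1+x) := by field_simp; ring
  rw [h3] at h2
  refine le_trans ?_ h2
  rw [le_div_iff₀ h1]; nlinarith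

lemma RNN.log_le' {x : ℝ} (hx : 0 ≤ x) : Real.log (1+x) ≤ x := by
  have := Real.log_le_sub_one_of_pos (show (0:ℝ) < 1 + x by linarith)
  linarith

lemma RNN.hasDerivAt_Psi {x : ℝ} (hx : 0 < x) :
    HasDerivAt Psi (Real.log (1+x)) x := by
  have h1 : (0:ℝ) < 1 + x := by linarith
  have hl : HasDerivAt (fun y : ℝ => Real.log (1+y)) (1/(1+x)) x := by
    simpa [Function.comp_def] using (Real.hasDerivAt_log h1.ne').comp x ((hasDerivAt_id x).const_add 1)
  have hm : HasDerivAt (fun y : ℝ => (1+y) * Real.log (1+y))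
      (1 * Real.log (1+x) + (1+x) * (1/(1+x))) x :=
    ((hasDerivAt_id x).const_add 1).mul hl
  have := hm.sub (hasDerivAt_id x)
  exact this.congr_deriv (by field_simp; ring)

lemma RNN.contOn_Psi : ContinuousOn Psi (Set.Ici 0) := by
  intro x hx
  have h1 : (0:ℝ) < 1 + x := by simp at hx; linarith
  refine ContinuousAt.continuousWithinAt ?_
  exact ((continuousAt_const.add continuousAt_id).mul
      ((Real.continuousAt_log h1.ne').comp (continuousAt_const.add continuousAt_id))).sub
      continuousAt_id

lemma RNN.mono_aux {f f' : ℝ → ℝ} (hc : ContinuousOn f (Set.Ici 0))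
    (hd : ∀ x : ℝ, 0 < x → HasDerivAt f (f' x) x)
    (h0 : ∀ x : ℝ, 0 < x → 0 ≤ f' x) {x : ℝ} (hx : 0 ≤ x) : f 0 ≤ f x := by
  have := monotoneOn_of_hasDerivWithinAt_nonneg (f := f) (f' := f') (convex_Ici 0) hc
    (fun y hy => by
      rw [interior_Ici] at hy
      exact (hd y hy).hasDerivWithinAt)
    (fun y hy => by rw [interior_Ici] at hy; exact h0 y hy)
  exact this Set.self_mem_Ici hx hx

lemma RNN.Psi_le {x : ℝ} (hx : 0 ≤ x) : Psi x ≤ x^2/2 := by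
  have h := RNN.mono_aux (f := fun y => y^2/2 - Psi y) (f' := fun y => y - Real.log (1+y))
    (by exact (continuous_pow 2).continuousOn.div_const 2 |>.sub RNN.contOn_Psi)
    (fun y hy => by
      have : HasDerivAt (fun y : ℝ => y^2/2) y y := by
        simpa using ((hasDerivAt_pow 2 y).div_const 2)
      exact this.sub (RNN.hasDerivAt_Psi hy))
    (fun y hy => by simpa using RNN.log_le' hy.le) hx
  simp [Psi] at h ⊢
  linarith

lemma RNN.le_Psi {x : ℝ} (hx : 0 ≤ x) : x^2/2 - x^3/3 ≤ Psi x := by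
  have h := RNN.mono_aux (f := fun y => Psi y - (y^2/2 - y^3/3))
    (f' := fun y => Real.log (1+y) - (y - y^2))
    (by exact RNN.contOn_Psi.sub (((continuous_pow 2).continuousOn.div_const 2).sub
      ((continuous_pow 3).continuousOn.div_const 3)))
    (fun y hy => by
      have h2 : HasDerivAt (fun y : ℝ => y^2/2 - y^3/3) (y - y^2) y := by
        have := ((hasDerivAt_pow 2 y).div_const 2).sub ((hasDerivAt_pow 3 y).div_const 3)
        exact this.congr_deriv (by push_cast; ring)
      exact (RNN.hasDerivAt_Psi hy).sub h2)
    (fun y hy => by simpa using RNN.le_log' hy.le) hx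
  simp [Psi] at h ⊢
  linarith

lemma RNN.gauss (m : ℕ) : ∑ j ∈ Finset.range m, (j:ℝ) = m*(m-1)/2 := by
  induction m with
  | zero => simp
  | succ n ih => rw [Finset.sum_range_succ, ih]; push_cast; ring

lemma RNN.sumsq (m : ℕ) : ∑ j ∈ Finset.range m, (j:ℝ)^2 ≤ (m:ℝ)^3 := by
  calc ∑ j ∈ Finset.range m, (j:ℝ)^2 ≤ ∑ _j ∈ Finset.range m, (m:ℝ)^2 := by
        refine Finset.sum_le_sum fun j hj => ?_
        have : (j:ℝ) ≤ m := by
          exact_mod_cast (Finset.mem_range.mp hj).le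
        exact pow_le_pow_left₀ (by positivity) this 2
    _ = (m:ℝ) * (m:ℝ)^2 := by rw [Finset.sum_const, Finset.card_range]; ring
    _ = (m:ℝ)^3 := by ring

lemma RNN.cube_div (a b : ℝ) (hb : 0 ≤ b) :
    (a / b ^ ((2:ℝ)/3))^3 = a^3 / b^2 := by
  rw [div_pow, ← Real.rpow_natCast (b ^ ((2:ℝ)/3)) 3, ← Real.rpow_mul hb]
  norm_num

lemma RNN.tendsto_div_add (c : ℝ) :
    Tendsto (fun t : ℝ => t / (t + c)) atTop (nhds 1) := by
  have h2 : Tendsto (fun t : ℝ => t + c) atTop atTop :=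
    tendsto_atTop_add_const_right _ c tendsto_id
  have h3 : Tendsto (fun t : ℝ => c * (t + c)⁻¹) atTop (nhds 0) := by
    simpa using (h2.inv_tendsto_atTop).const_mul c
  have h4 : Tendsto (fun t : ℝ => 1 - c * (t + c)⁻¹) atTop (nhds 1) := by
    simpa using tendsto_const_nhds.sub h3
  refine h4.congr' ?_
  filter_upwards [h2.eventually_gt_atTop 0] with t ht
  field_simp; ring

set_option maxHeartbeats 2000000 in
/-- If `k/√n → ∞` and `k/n^{2/3} → 0`, then `nΨ(k/n) − k²/(2n) → 0`, and
consequently `Q_{n,k} ~ (n/k²)·exp(k²/(2n))`. -/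
theorem Q_supercritical_mesoscopic (k : ℕ → ℕ)
    (h1 : Tendsto (fun n => (k n : ℝ) / Real.sqrt n) atTop atTop)
    (h2 : Tendsto (fun n => (k n : ℝ) / (n : ℝ) ^ ((2 : ℝ) / 3)) atTop (nhds 0)) :
    Tendsto (fun n : ℕ => (n : ℝ) * Psi ((k n : ℝ) / n) - (k n : ℝ) ^ 2 / (2 * n))
        atTop (nhds 0) ∧
    Tendsto (fun n => Q n (k n) /
        (((n : ℝ) / (k n : ℝ) ^ 2) * Real.exp ((k n : ℝ) ^ 2 / (2 * n))))
      atTop (nhds 1) := by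
  -- derived limits
  have hk3 : Tendsto (fun n : ℕ => (k n : ℝ)^3 / (n:ℝ)^2) atTop (nhds 0) := by
    have := h2.pow 3
    simp only [ne_eq, OfNat.ofNat_ne_zero, not_false_eq_true, zero_pow] at this
    refine this.congr fun n => RNN.cube_div _ _ (Nat.cast_nonneg n)
  have hrpow : Tendsto (fun n : ℕ => (n:ℝ) ^ ((2:ℝ)/3)) atTop atTop :=
    (tendsto_rpow_atTop (by norm_num)).comp tendsto_natCast_atTop_atTop
  have hm3 : Tendsto (fun n : ℕ => ((k n : ℝ) + 2)^3 / (n:ℝ)^2) atTop (nhds 0) := by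
    have hc2 : Tendsto (fun n : ℕ => 2 / (n:ℝ) ^ ((2:ℝ)/3)) atTop (nhds 0) := by
      simpa [div_eq_mul_inv] using (hrpow.inv_tendsto_atTop).const_mul (2:ℝ)
    have hsum : Tendsto (fun n : ℕ => ((k n : ℝ) + 2) / (n:ℝ) ^ ((2:ℝ)/3)) atTop (nhds 0) := by
      have := h2.add hc2
      simpa [add_div] using this
    have := hsum.pow 3
    simp only [ne_eq, OfNat.ofNat_ne_zero, not_false_eq_true, zero_pow] at this
    refine this.congr fun n => RNN.cube_div _ _ (Nat.cast_nonneg n)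
  have hs : Tendsto (fun n : ℕ => (k n : ℝ)^2 / (n:ℝ)) atTop atTop := by
    have := h1.atTop_mul_atTop₀ h1
    refine this.congr fun n => ?_
    rw [div_mul_div_comm, Real.mul_self_sqrt (Nat.cast_nonneg n), ← sq]
  have hkR : Tendsto (fun n : ℕ => (k n : ℝ)) atTop atTop := by
    refine tendsto_atTop_mono' _ ?_ h1
    filter_upwards [eventually_ge_atTop 1] with n hn
    have h1n : (1:ℝ) ≤ Real.sqrt n := by
      rw [show (1:ℝ) = Real.sqrt 1 by simp]
      exact Real.sqrt_le_sqrt (by exact_mod_cast hn)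
    exact div_le_self (Nat.cast_nonneg _) h1n
  have hk2 : ∀ᶠ n : ℕ in atTop, (n:ℝ) ≤ (k n : ℝ)^2 := by
    filter_upwards [h1.eventually_ge_atTop 1, eventually_ge_atTop 1] with n hn h1n
    have hsp : (0:ℝ) < Real.sqrt n := Real.sqrt_pos.mpr (by exact_mod_cast h1n)
    have : Real.sqrt n ≤ (k n : ℝ) := by
      rw [le_div_iff₀ hsp, one_mul] at hn; linarith
    calc (n:ℝ) = Real.sqrt n * Real.sqrt n := (Real.mul_self_sqrt (Nat.cast_nonneg n)).symm
      _ ≤ (k n : ℝ) * (k n : ℝ) := mul_le_mul this this hsp.le (Nat.cast_nonneg _)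
      _ = (k n : ℝ)^2 := (sq _).symm
  have hk0 : Tendsto (fun n : ℕ => (k n : ℝ) / n) atTop (nhds 0) := by
    refine tendsto_of_tendsto_of_tendsto_of_le_of_le' tendsto_const_nhds hk3 ?_ ?_
    · filter_upwards with n; positivity
    · filter_upwards [hk2, eventually_ge_atTop 1, hkR.eventually_ge_atTop 1] with n hn h1n hk1
      have hn0 : (0:ℝ) < n := by exact_mod_cast h1n
      rw [div_le_div_iff₀ hn0 (by positivity)]
      nlinarith [mul_le_mul_of_nonneg_left hn (by positivity : (0:ℝ) ≤ (k n : ℝ) * n)]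
  -- Part 1
  have part1 : Tendsto (fun n : ℕ => (n : ℝ) * Psi ((k n : ℝ) / n) - (k n : ℝ) ^ 2 / (2 * n))
      atTop (nhds 0) := by
    refine tendsto_of_tendsto_of_tendsto_of_le_of_le'
      (by simpa using hk3.const_mul (-(1/3):ℝ)) tendsto_const_nhds ?_ ?_
    · filter_upwards [eventually_ge_atTop 1] with n h1n
      have hn0 : (0:ℝ) < n := by exact_mod_cast h1n
      have hx : (0:ℝ) ≤ (k n : ℝ) / n := by positivity
      have := RNN.le_Psi hx
      have hid : (n:ℝ) * (((k n : ℝ)/n)^2/2 - ((k n : ℝ)/n)^3/3)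
          = (k n : ℝ)^2/(2*n) - (1/3) * ((k n : ℝ)^3/(n:ℝ)^2) := by
        field_simp
      nlinarith [mul_le_mul_of_nonneg_left this hn0.le]
    · filter_upwards [eventually_ge_atTop 1] with n h1n
      have hn0 : (0:ℝ) < n := by exact_mod_cast h1n
      have hx : (0:ℝ) ≤ (k n : ℝ) / n := by positivity
      have := RNN.Psi_le hx
      have hid : (n:ℝ) * (((k n : ℝ)/n)^2/2) = (k n : ℝ)^2/(2*n) := by
        field_simp
      nlinarith [mul_le_mul_of_nonneg_left this hn0.le]
  refine ⟨part1, ?_⟩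
  -- Part 2
  set S : ℕ → ℝ := fun n => ∑ j ∈ Finset.range (k n + 2), Real.log (1 + (j:ℝ)/n) with hSdef
  set s : ℕ → ℝ := fun n => (k n : ℝ)^2 / (2*n) with hsdef
  -- S n - s n → 0
  have hS : Tendsto (fun n => S n - s n) atTop (nhds 0) := by
    have hU : Tendsto (fun n : ℕ => (3/2) * ((k n : ℝ)/n) + 1/n) atTop (nhds 0) := by
      have := (hk0.const_mul (3/2:ℝ)).add tendsto_one_div_atTop_nhds_zero_nat
      simpa using this
    refine tendsto_of_tendsto_of_tendsto_of_le_of_le' (by simpa using hm3.neg) hU ?_ ?_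
    · filter_upwards [eventually_ge_atTop 1] with n h1n
      have hn0 : (0:ℝ) < n := by exact_mod_cast h1n
      have hlow : ∀ j ∈ Finset.range (k n + 2),
          (j:ℝ)/n - ((j:ℝ)/n)^2 ≤ Real.log (1 + (j:ℝ)/n) :=
        fun j _ => RNN.le_log' (by positivity)
      have h1 : ∑ j ∈ Finset.range (k n + 2), ((j:ℝ)/n - ((j:ℝ)/n)^2) ≤ S n :=
        Finset.sum_le_sum hlow
      have h2 : ∑ j ∈ Finset.range (k n + 2), ((j:ℝ)/n - ((j:ℝ)/n)^2)
          = (∑ j ∈ Finset.range (k n + 2), (j:ℝ))/n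
            - (∑ j ∈ Finset.range (k n + 2), (j:ℝ)^2)/(n:ℝ)^2 := by
        rw [Finset.sum_sub_distrib, Finset.sum_div, Finset.sum_div]
        exact congrArg₂ (· - ·) rfl (Finset.sum_congr rfl fun j _ => div_pow _ _ _)
      have h3 := RNN.gauss (k n + 2)
      have h4 := RNN.sumsq (k n + 2)
      have hcast : ((k n + 2 : ℕ) : ℝ) = (k n : ℝ) + 2 := by push_cast; ring
      rw [h3, hcast] at h2
      have hden : (0:ℝ) < (n:ℝ)^2 := by positivity
      have h5 : (∑ j ∈ Finset.range (k n + 2), (j:ℝ)^2)/(n:ℝ)^2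
          ≤ ((k n : ℝ) + 2)^3/(n:ℝ)^2 := by
        rw [← hcast]
        exact (div_le_div_iff_of_pos_right hden).mpr h4
      have h6 : (k n : ℝ)^2/(2*n) ≤ (((k n : ℝ)+2) * (((k n : ℝ)+2) - 1)/2)/n := by
        rw [div_le_div_iff₀ (by positivity) hn0]
        nlinarith [(Nat.cast_nonneg (k n) : (0:ℝ) ≤ (k n : ℝ))]
      simp only [hsdef]
      linarith
    · filter_upwards [eventually_ge_atTop 1] with n h1n
      have hn0 : (0:ℝ) < n := by exact_mod_cast h1n
      have hup : S n ≤ ∑ j ∈ Finset.range (k n + 2), (j:ℝ)/n :=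
        Finset.sum_le_sum (fun j _ => RNN.log_le' (by positivity))
      have h2 : ∑ j ∈ Finset.range (k n + 2), (j:ℝ)/n
          = (∑ j ∈ Finset.range (k n + 2), (j:ℝ))/n := (Finset.sum_div _ _ _).symm
      have h3 := RNN.gauss (k n + 2)
      have hcast : ((k n + 2 : ℕ) : ℝ) = (k n : ℝ) + 2 := by push_cast; ring
      rw [h3, hcast] at h2
      have hid : (((k n : ℝ)+2) * (((k n : ℝ)+2) - 1)/2)/n - (k n : ℝ)^2/(2*n)
          = (3/2) * ((k n : ℝ)/n) + 1/n := by
        field_simp; ring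
      simp only [hsdef]
      linarith
  -- A n → 1
  have hA : Tendsto (fun n => Real.exp (S n - s n)) atTop (nhds 1) := by
    have := (Real.continuous_exp.tendsto' 0 1 Real.exp_zero).comp hS
    exact this
  -- eventually k n + 2 ≤ n
  have hkle : ∀ᶠ n : ℕ in atTop, k n + 2 ≤ n := by
    have h14 : ∀ᶠ n : ℕ in atTop, (k n : ℝ)/n < 1/4 :=
      hk0.eventually (gt_mem_nhds (by norm_num))
    filter_upwards [h14, eventually_ge_atTop 8] with n hn h8
    have hn0 : (0:ℝ) < n := by exact_mod_cast lt_of_lt_of_le (by norm_num) h8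
    have h8' : (8:ℝ) ≤ n := by exact_mod_cast h8
    have : (k n : ℝ) < n/4 := by
      rw [div_lt_iff₀ hn0] at hn; linarith
    have : ((k n + 2 : ℕ) : ℝ) ≤ (n:ℝ) := by push_cast; linarith
    exact_mod_cast this
  -- B n → 0
  have hsinf : Tendsto s atTop atTop := by
    have := hs.atTop_div_const (show (0:ℝ) < 2 by norm_num)
    refine this.congr fun n => ?_
    simp only [hsdef]; ring
  have hexp0 : Tendsto (fun n => Real.exp (-(s n))) atTop (nhds 0) :=
    Real.tendsto_exp_neg_atTop_nhds_zero.comp hsinf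
  have hB : Tendsto (fun n => (∏ j ∈ Finset.range (k n + 2), (1 - (j:ℝ)/n))
      * Real.exp (-(s n))) atTop (nhds 0) := by
    refine tendsto_of_tendsto_of_tendsto_of_le_of_le' tendsto_const_nhds hexp0 ?_ ?_
    · filter_upwards [hkle] with n hn
      have hprod : (0:ℝ) ≤ ∏ j ∈ Finset.range (k n + 2), (1 - (j:ℝ)/n) := by
        refine Finset.prod_nonneg fun j hj => ?_
        have hj' : j < k n + 2 := Finset.mem_range.mp hj
        have : (j:ℝ) ≤ n := by
          have : j ≤ n := by omega
          exact_mod_cast this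
        have hn0 : (0:ℝ) < n := by
          have : 0 < n := by omega
          exact_mod_cast this
        have : (j:ℝ)/n ≤ 1 := by rw [div_le_one hn0]; exact this
        linarith
      positivity
    · filter_upwards [hkle] with n hn
      have hn0 : (0:ℝ) < n := by
        have : 0 < n := by omega
        exact_mod_cast this
      have hprod : ∏ j ∈ Finset.range (k n + 2), (1 - (j:ℝ)/n) ≤ 1 := by
        refine Finset.prod_le_one (fun j hj => ?_) (fun j hj => ?_)
        · have hj' : j < k n + 2 := Finset.mem_range.mp hj
          have : (j:ℝ) ≤ n := by
            have : j ≤ n := by omega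
            exact_mod_cast this
          have : (j:ℝ)/n ≤ 1 := by rw [div_le_one hn0]; exact this
          linarith
        · have : (0:ℝ) ≤ (j:ℝ)/n := by positivity
          linarith
      have he : (0:ℝ) < Real.exp (-(s n)) := Real.exp_pos _
      have hp0 : (0:ℝ) ≤ ∏ j ∈ Finset.range (k n + 2), (1 - (j:ℝ)/n) := by
        refine Finset.prod_nonneg fun j hj => ?_
        have hj' : j < k n + 2 := Finset.mem_range.mp hj
        have hjn : (j:ℝ) ≤ n := by
          have : j ≤ n := by omega
          exact_mod_cast this
        have : (j:ℝ)/n ≤ 1 := by rw [div_le_one hn0]; exact hjn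
        linarith
      nlinarith
  -- c n → 1
  have hc : Tendsto (fun n => (k n : ℝ)^2 / (((k n : ℝ)+1) * ((k n : ℝ)+2)))
      atTop (nhds 1) := by
    have t1 : Tendsto (fun n => (k n : ℝ)/((k n : ℝ)+1)) atTop (nhds 1) :=
      (RNN.tendsto_div_add 1).comp hkR
    have t2 : Tendsto (fun n => (k n : ℝ)/((k n : ℝ)+2)) atTop (nhds 1) :=
      (RNN.tendsto_div_add 2).comp hkR
    have := t1.mul t2
    rw [mul_one] at this
    refine this.congr fun n => ?_
    rw [div_mul_div_comm, ← sq]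
  -- combine
  have hmain : Tendsto (fun n => (k n : ℝ)^2 / (((k n : ℝ)+1) * ((k n : ℝ)+2)) *
      (Real.exp (S n - s n) - (∏ j ∈ Finset.range (k n + 2), (1 - (j:ℝ)/n))
        * Real.exp (-(s n)))) atTop (nhds 1) := by
    have := hc.mul (hA.sub hB)
    simpa using this
  refine hmain.congr' ?_
  filter_upwards [hkle, hkR.eventually_ge_atTop 1, eventually_ge_atTop 1]
    with n hkn hk1 h1n
  have hn0 : (0:ℝ) < n := by exact_mod_cast h1n
  have hk0' : (0:ℝ) < (k n : ℝ) := by exact_mod_cast lt_of_lt_of_le one_pos hk1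
  -- product of (1 + j/n) equals exp (S n)
  have hPp : ∏ j ∈ Finset.range (k n + 2), (1 + (j:ℝ)/n) = Real.exp (S n) := by
    rw [hSdef, Real.exp_sum]
    refine Finset.prod_congr rfl fun j _ => ?_
    rw [Real.exp_log (by positivity)]
  have hQ : Q n (k n) = ((n:ℝ) / (((k n : ℝ)+1) * ((k n : ℝ)+2))) *
      (Real.exp (S n) - ∏ j ∈ Finset.range (k n + 2), (1 - (j:ℝ)/n)) := by
    rw [Q, hPp]
  rw [hQ, Real.exp_sub]
  have he : (0:ℝ) < Real.exp (s n) := Real.exp_pos _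
  rw [Real.exp_neg]
  field_simp
  ring
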